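/- arXiv:2510.03989 — 4 statements merged into one kernel-verified Lean document; each statement's English description precedes it below -/
import Mathlib

section
/- Let (Ω, μ) be a measure space with 0 < μ(Ω) < ∞, let v ∈ L²(μ) be real-valued, and set α = (1/μ(Ω)) ∫ v dμ and β = (1/μ(Ω)) ∫ (v − α)² dμ. Assume β > 0 and let σ₁ ∈ ℝ, σ₂ > 0. Define u = σ₂ · (v − α)/√β + σ₁. Then u belongs to the constraint set S₁(σ₁, σ₂) (i.e., (1/μ(Ω)) ∫ u dμ = σ₁ and (1/μ(Ω)) ∫ (u − σ₁)² dμ = σ₂²), and for every real-valued w ∈ L²(μ) with (1/μ(Ω)) ∫ w dμ = σ₁ and (1/μ(Ω)) ∫ (w − σ₁)² dμ = σ₂², one has ∫ (u − v)² dμ ≤ ∫ (w − v)² dμ. In other words, u is a minimizer of the squared L² distance to v over S₁(σ₁, σ₂). -/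
open MeasureTheory

/-- Product of two `L²` functions is integrable (via the polarization identity). -/
lemma memLp_two_integrable_mul {Ω : Type*} [MeasurableSpace Ω] {μ : Measure Ω}
    {f g : Ω → ℝ} (hf : MemLp f 2 μ) (hg : MemLp g 2 μ) :
    Integrable (fun x => f x * g x) μ := by
  have h1 := (hf.add hg).integrable_sq
  have h2 := hf.integrable_sq
  have h3 := hg.integrable_sq
  have heq : (fun x => f x * g x)
      = fun x => ((f x + g x) ^ 2 - f x ^ 2 - g x ^ 2) * (1 / 2) := by
    funext x; ring
  rw [heq]
  exact ((h1.sub h2).sub h3).mul_const _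

/-- Theorem 2.1: the layer-normalization formula `u = σ₂ (v − α)/√β + σ₁` lies in the
constraint set `S₁(σ₁, σ₂)` and minimizes the squared `L²` distance to `v` over that set. -/
theorem layer_norm_projection_minimizer
    {Ω : Type*} [MeasurableSpace Ω] (μ : Measure Ω)
    (h0 : 0 < μ Set.univ) (hfin : μ Set.univ < ⊤)
    (v : Ω → ℝ) (hv : MemLp v 2 μ)
    (α β : ℝ)
    (hα : α = ((μ Set.univ).toReal)⁻¹ * ∫ x, v x ∂μ)
    (hβ : β = ((μ Set.univ).toReal)⁻¹ * ∫ x, (v x - α) ^ 2 ∂μ)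
    (hβpos : 0 < β)
    (σ₁ σ₂ : ℝ) (hσ₂ : 0 < σ₂)
    (u : Ω → ℝ)
    (hu : ∀ x, u x = σ₂ * (v x - α) / Real.sqrt β + σ₁) :
    (((μ Set.univ).toReal)⁻¹ * ∫ x, u x ∂μ = σ₁ ∧
      ((μ Set.univ).toReal)⁻¹ * ∫ x, (u x - σ₁) ^ 2 ∂μ = σ₂ ^ 2) ∧
    ∀ w : Ω → ℝ, MemLp w 2 μ →
      ((μ Set.univ).toReal)⁻¹ * ∫ x, w x ∂μ = σ₁ →
      ((μ Set.univ).toReal)⁻¹ * ∫ x, (w x - σ₁) ^ 2 ∂μ = σ₂ ^ 2 →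
      ∫ x, (u x - v x) ^ 2 ∂μ ≤ ∫ x, (w x - v x) ^ 2 ∂μ := by
  haveI : IsFiniteMeasure μ := ⟨hfin⟩
  set M : ℝ := (μ Set.univ).toReal with hMdef
  have hM : 0 < M := ENNReal.toReal_pos h0.ne' hfin.ne
  have hMne : M ≠ 0 := hM.ne'
  have hsβ : Real.sqrt β ≠ 0 := (Real.sqrt_pos.mpr hβpos).ne'
  set c : ℝ := σ₂ / Real.sqrt β with hcdef
  have hc : 0 < c := div_pos hσ₂ (Real.sqrt_pos.mpr hβpos)
  have hc2 : c ^ 2 * β = σ₂ ^ 2 := by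
    rw [hcdef, div_pow, Real.sq_sqrt hβpos.le]
    field_simp
  -- basic integrability facts
  have hvα : MemLp (fun x => v x - α) 2 μ := hv.sub (memLp_const α)
  have int_v : Integrable v μ := hv.integrable one_le_two
  have int_vα : Integrable (fun x => v x - α) μ := hvα.integrable one_le_two
  have int_vα2 : Integrable (fun x => (v x - α) ^ 2) μ := hvα.integrable_sq
  have eConst : ∀ r : ℝ, ∫ _ : Ω, r ∂μ = M * r := by
    intro r; rw [integral_const]; simp [smul_eq_mul, hMdef, Measure.real]
  -- mean of v - α is zero
  have hIv : ∫ x, v x ∂μ = M * α := by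
    rw [hα]; field_simp
  have hint_vα : ∫ x, (v x - α) ∂μ = 0 := by
    rw [integral_sub int_v (integrable_const α), eConst, hIv]
    ring
  have hI2 : ∫ x, (v x - α) ^ 2 ∂μ = M * β := by
    rw [hβ]; field_simp
  have emul_vα : ∀ r : ℝ, ∫ x, r * (v x - α) ∂μ = 0 := by
    intro r; rw [integral_const_mul, hint_vα, mul_zero]
  have emul_vα2 : ∀ r : ℝ, ∫ x, r * (v x - α) ^ 2 ∂μ = r * (M * β) := by
    intro r; rw [integral_const_mul, hI2]
  -- rewrite u
  have hu' : ∀ x, u x = c * (v x - α) + σ₁ := by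
    intro x; rw [hu x, hcdef]; ring
  -- membership in the constraint set
  have hmem1 : M⁻¹ * ∫ x, u x ∂μ = σ₁ := by
    have e0 : ∫ x, u x ∂μ = ∫ x, (c * (v x - α) + σ₁) ∂μ :=
      integral_congr_ae (Filter.Eventually.of_forall fun x => hu' x)
    have e1 : ∫ x, (c * (v x - α) + σ₁) ∂μ
        = (∫ x, c * (v x - α) ∂μ) + ∫ _ : Ω, σ₁ ∂μ :=
      integral_add (int_vα.const_mul c) (integrable_const σ₁)
    rw [e0, e1, emul_vα, eConst]
    field_simp; ring
  have hmem2 : M⁻¹ * ∫ x, (u x - σ₁) ^ 2 ∂μ = σ₂ ^ 2 := by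
    have e0 : ∫ x, (u x - σ₁) ^ 2 ∂μ = ∫ x, c ^ 2 * (v x - α) ^ 2 ∂μ := by
      refine integral_congr_ae (Filter.Eventually.of_forall fun x => ?_)
      simp only [hu']; ring
    rw [e0, emul_vα2, ← hc2]
    field_simp
  refine ⟨⟨hmem1, hmem2⟩, ?_⟩
  -- the minimization part
  intro w hw hw1 hw2
  have hwσ : MemLp (fun x => w x - σ₁) 2 μ := hw.sub (memLp_const σ₁)
  have int_w : Integrable w μ := hw.integrable one_le_two
  have int_wσ : Integrable (fun x => w x - σ₁) μ := hwσ.integrable one_le_two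
  have int_wσ2 : Integrable (fun x => (w x - σ₁) ^ 2) μ := hwσ.integrable_sq
  have int_K : Integrable (fun x => (w x - σ₁) * (v x - α)) μ :=
    memLp_two_integrable_mul hwσ hvα
  have hint_wσ : ∫ x, (w x - σ₁) ∂μ = 0 := by
    have hIw : ∫ x, w x ∂μ = M * σ₁ := by
      field_simp at hw1; linarith [hw1]
    rw [integral_sub int_w (integrable_const σ₁), eConst, hIw]
    ring
  have hJ2 : ∫ x, (w x - σ₁) ^ 2 ∂μ = M * σ₂ ^ 2 := by
    field_simp at hw2; linarith [hw2]
  have emul_wσ : ∀ r : ℝ, ∫ x, r * (w x - σ₁) ∂μ = 0 := by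
    intro r; rw [integral_const_mul, hint_wσ, mul_zero]
  set K : ℝ := ∫ x, (w x - σ₁) * (v x - α) ∂μ with hKdef
  have emul_K : ∀ r : ℝ, ∫ x, r * ((w x - σ₁) * (v x - α)) ∂μ = r * K := by
    intro r; rw [integral_const_mul, ← hKdef]
  -- value of the objective at u
  have hval_u : ∫ x, (u x - v x) ^ 2 ∂μ = (c - 1) ^ 2 * (M * β) + M * (σ₁ - α) ^ 2 := by
    have e0 : ∫ x, (u x - v x) ^ 2 ∂μ
        = ∫ x, ((c - 1) ^ 2 * (v x - α) ^ 2
            + ((2 * (c - 1) * (σ₁ - α)) * (v x - α) + (σ₁ - α) ^ 2)) ∂μ := by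
      refine integral_congr_ae (Filter.Eventually.of_forall fun x => ?_)
      simp only [hu']; ring
    have e1 : ∫ x, ((c - 1) ^ 2 * (v x - α) ^ 2
            + ((2 * (c - 1) * (σ₁ - α)) * (v x - α) + (σ₁ - α) ^ 2)) ∂μ
        = (∫ x, (c - 1) ^ 2 * (v x - α) ^ 2 ∂μ)
            + ∫ x, ((2 * (c - 1) * (σ₁ - α)) * (v x - α) + (σ₁ - α) ^ 2) ∂μ :=
      integral_add (int_vα2.const_mul _) ((int_vα.const_mul _).add (integrable_const _))
    have e2 : ∫ x, ((2 * (c - 1) * (σ₁ - α)) * (v x - α) + (σ₁ - α) ^ 2) ∂μ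
        = (∫ x, (2 * (c - 1) * (σ₁ - α)) * (v x - α) ∂μ) + ∫ _ : Ω, (σ₁ - α) ^ 2 ∂μ :=
      integral_add (int_vα.const_mul _) (integrable_const _)
    rw [e0, e1, e2, emul_vα2, emul_vα, eConst]
    ring
  -- value of the objective at w
  have hval_w : ∫ x, (w x - v x) ^ 2 ∂μ
      = M * σ₂ ^ 2 + M * β - 2 * K + M * (σ₁ - α) ^ 2 := by
    have e0 : ∫ x, (w x - v x) ^ 2 ∂μ
        = ∫ x, ((w x - σ₁) ^ 2 + ((v x - α) ^ 2
            + ((-2 : ℝ) * ((w x - σ₁) * (v x - α))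
            + ((2 * (σ₁ - α)) * (w x - σ₁)
            + ((-2 * (σ₁ - α)) * (v x - α) + (σ₁ - α) ^ 2))))) ∂μ := by
      refine integral_congr_ae (Filter.Eventually.of_forall fun x => ?_)
      ring
    have i5 : Integrable (fun x => (-2 * (σ₁ - α)) * (v x - α) + (σ₁ - α) ^ 2) μ :=
      (int_vα.const_mul _).add (integrable_const _)
    have i4 : Integrable (fun x => (2 * (σ₁ - α)) * (w x - σ₁)
        + ((-2 * (σ₁ - α)) * (v x - α) + (σ₁ - α) ^ 2)) μ :=
      (int_wσ.const_mul _).add i5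
    have i3 : Integrable (fun x => (-2 : ℝ) * ((w x - σ₁) * (v x - α))
        + ((2 * (σ₁ - α)) * (w x - σ₁)
          + ((-2 * (σ₁ - α)) * (v x - α) + (σ₁ - α) ^ 2))) μ :=
      (int_K.const_mul _).add i4
    have i2 : Integrable (fun x => (v x - α) ^ 2
        + ((-2 : ℝ) * ((w x - σ₁) * (v x - α))
          + ((2 * (σ₁ - α)) * (w x - σ₁)
          + ((-2 * (σ₁ - α)) * (v x - α) + (σ₁ - α) ^ 2)))) μ :=
      int_vα2.add i3
    have e1 : ∫ x, ((w x - σ₁) ^ 2 + ((v x - α) ^ 2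
            + ((-2 : ℝ) * ((w x - σ₁) * (v x - α))
            + ((2 * (σ₁ - α)) * (w x - σ₁)
            + ((-2 * (σ₁ - α)) * (v x - α) + (σ₁ - α) ^ 2))))) ∂μ
        = (∫ x, (w x - σ₁) ^ 2 ∂μ) + ((∫ x, (v x - α) ^ 2 ∂μ)
            + ((∫ x, (-2 : ℝ) * ((w x - σ₁) * (v x - α)) ∂μ)
            + ((∫ x, (2 * (σ₁ - α)) * (w x - σ₁) ∂μ)
            + ((∫ x, (-2 * (σ₁ - α)) * (v x - α) ∂μ) + ∫ _ : Ω, (σ₁ - α) ^ 2 ∂μ)))) := by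
      rw [integral_add int_wσ2 i2, integral_add int_vα2 i3,
        integral_add (int_K.const_mul _) i4, integral_add (int_wσ.const_mul _) i5,
        integral_add (int_vα.const_mul _) (integrable_const _)]
    rw [e0, e1, hJ2, hI2, emul_K, emul_wσ, emul_vα, eConst]
    ring
  -- nonnegativity of the quadratic form (Cauchy–Schwarz substitute)
  have hQ : (0 : ℝ) ≤ M * σ₂ ^ 2 - 2 * c * K + c ^ 2 * (M * β) := by
    have hnn : (0 : ℝ) ≤ ∫ x, ((w x - σ₁) - c * (v x - α)) ^ 2 ∂μ :=
      integral_nonneg fun x => sq_nonneg _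
    have e0 : ∫ x, ((w x - σ₁) - c * (v x - α)) ^ 2 ∂μ
        = ∫ x, ((w x - σ₁) ^ 2 + ((c ^ 2) * (v x - α) ^ 2
            + ((-2 * c) * ((w x - σ₁) * (v x - α)))) ) ∂μ := by
      refine integral_congr_ae (Filter.Eventually.of_forall fun x => ?_)
      ring
    have i2 : Integrable (fun x => (c ^ 2) * (v x - α) ^ 2
        + ((-2 * c) * ((w x - σ₁) * (v x - α)))) μ :=
      (int_vα2.const_mul _).add (int_K.const_mul _)
    have e1 : ∫ x, ((w x - σ₁) ^ 2 + ((c ^ 2) * (v x - α) ^ 2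
            + ((-2 * c) * ((w x - σ₁) * (v x - α)))) ) ∂μ
        = (∫ x, (w x - σ₁) ^ 2 ∂μ) + ((∫ x, (c ^ 2) * (v x - α) ^ 2 ∂μ)
            + ∫ x, (-2 * c) * ((w x - σ₁) * (v x - α)) ∂μ) := by
      rw [integral_add int_wσ2 i2, integral_add (int_vα2.const_mul _) (int_K.const_mul _)]
    rw [e0, e1, hJ2, emul_vα2, emul_K] at hnn
    linarith
  rw [hval_u, hval_w]
  nlinarith [mul_pos hM hβpos, sq_nonneg (c - 1), mul_pos hc hM]
end

section
/- Let (Ω, μ) be a measure space with 0 < μ(Ω) < ∞, let v ∈ L²(μ) be real-valued with mean α = (1/μ(Ω)) ∫ v dμ and variance β = (1/μ(Ω)) ∫ (v − α)² dμ, and assume β > 0 and σ₂ > 0, σ₁ ∈ ℝ. If w ∈ L²(μ) satisfies (1/μ(Ω)) ∫ w dμ = σ₁, (1/μ(Ω)) ∫ (w − σ₁)² dμ = σ₂², and ∫ (w − v)² dμ ≤ ∫ (u − v)² dμ where u = σ₂ · (v − α)/√β + σ₁, then w = u μ-almost everywhere. That is, the minimizer in the layer-normalization projection problem is unique up to μ-null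 sets. -/
open MeasureTheory

/-- Uniqueness part of Theorem 2.1: any member of the constraint set whose squared `L²`
distance to `v` does not exceed that of `u = σ₂ (v − α)/√β + σ₁` coincides with `u`
μ-almost everywhere. -/
theorem layer_norm_projection_unique
    {Ω : Type*} [MeasurableSpace Ω] (μ : Measure Ω)
    (h0 : 0 < μ Set.univ) (hfin : μ Set.univ < ⊤)
    (v : Ω → ℝ) (hv : MemLp v 2 μ)
    (α β : ℝ)
    (hα : α = ((μ Set.univ).toReal)⁻¹ * ∫ x, v x ∂μ)
    (hβ : β = ((μ Set.univ).toReal)⁻¹ * ∫ x, (v x - α) ^ 2 ∂μ)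
    (hβpos : 0 < β)
    (σ₁ σ₂ : ℝ) (hσ₂ : 0 < σ₂)
    (u : Ω → ℝ)
    (hu : ∀ x, u x = σ₂ * (v x - α) / Real.sqrt β + σ₁)
    (w : Ω → ℝ) (hwmem : MemLp w 2 μ)
    (hwmean : ((μ Set.univ).toReal)⁻¹ * ∫ x, w x ∂μ = σ₁)
    (hwvar : ((μ Set.univ).toReal)⁻¹ * ∫ x, (w x - σ₁) ^ 2 ∂μ = σ₂ ^ 2)
    (hwmin : ∫ x, (w x - v x) ^ 2 ∂μ ≤ ∫ x, (u x - v x) ^ 2 ∂μ) :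
    w =ᵐ[μ] u := by
  have hμfin : IsFiniteMeasure μ := ⟨hfin⟩
  set M : ℝ := (μ Set.univ).toReal with hMdef
  have hM : 0 < M := ENNReal.toReal_pos h0.ne' hfin.ne
  -- basic membership / integrability facts
  have ha2 : MemLp (fun x => w x - σ₁) 2 μ := hwmem.sub (memLp_const σ₁)
  have hb2 : MemLp (fun x => v x - α) 2 μ := hv.sub (memLp_const α)
  have hvi : Integrable v μ := hv.integrable (by norm_num)
  have hwi : Integrable w μ := hwmem.integrable (by norm_num)
  have int1 : Integrable (fun x => (w x - σ₁) ^ 2) μ := ha2.integrable_sq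
  have int2 : Integrable (fun x => (v x - α) ^ 2) μ := hb2.integrable_sq
  have int3 : Integrable (fun x => (w x - σ₁) * (v x - α)) μ :=
    memLp_two_integrable_mul ha2 hb2
  have int4 : Integrable (fun x => w x - σ₁) μ := hwi.sub (integrable_const σ₁)
  have int5 : Integrable (fun x => v x - α) μ := hvi.sub (integrable_const α)
  -- basic integrals
  have Ia : ∫ x, (w x - σ₁) ∂μ = 0 := by
    rw [integral_sub hwi (integrable_const σ₁), integral_const]
    have hw' : ∫ x, w x ∂μ = σ₁ * M := by
      field_simp [hM.ne'] at hwmean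
      linarith
    rw [hw']; simp [smul_eq_mul, measureReal_def]; ring
  have Ib : ∫ x, (v x - α) ∂μ = 0 := by
    rw [integral_sub hvi (integrable_const α), integral_const]
    have hv' : ∫ x, v x ∂μ = α * M := by
      field_simp [hM.ne'] at hα
      linarith
    rw [hv']; simp [smul_eq_mul, measureReal_def]; ring
  have A : ∫ x, (w x - σ₁) ^ 2 ∂μ = σ₂ ^ 2 * M := by
    field_simp [hM.ne'] at hwvar
    linarith
  have B : ∫ x, (v x - α) ^ 2 ∂μ = β * M := by
    field_simp [hM.ne'] at hβ
    linarith
  set I : ℝ := ∫ x, (w x - σ₁) * (v x - α) ∂μ with hIdef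
  -- general linear-combination integral computation
  have key : ∀ (c1 c2 c3 c4 c5 k : ℝ),
      ∫ x, (c1 * (w x - σ₁) ^ 2 + (c2 * (v x - α) ^ 2 +
        (c3 * ((w x - σ₁) * (v x - α)) + (c4 * (w x - σ₁) + (c5 * (v x - α) + k))))) ∂μ
      = c1 * (σ₂ ^ 2 * M) + c2 * (β * M) + c3 * I + k * M := by
    intro c1 c2 c3 c4 c5 k
    have i1 : Integrable (fun x => c1 * (w x - σ₁) ^ 2) μ := int1.const_mul c1
    have i2' : Integrable (fun x => c2 * (v x - α) ^ 2) μ := int2.const_mul c2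
    have i3' : Integrable (fun x => c3 * ((w x - σ₁) * (v x - α))) μ := int3.const_mul c3
    have i4' : Integrable (fun x => c4 * (w x - σ₁)) μ := int4.const_mul c4
    have i5' : Integrable (fun x => c5 * (v x - α)) μ := int5.const_mul c5
    have i5 : Integrable (fun x => c5 * (v x - α) + k) μ := i5'.add (integrable_const k)
    have i4 : Integrable (fun x => c4 * (w x - σ₁) + (c5 * (v x - α) + k)) μ := i4'.add i5
    have i3 : Integrable (fun x => c3 * ((w x - σ₁) * (v x - α)) +
        (c4 * (w x - σ₁) + (c5 * (v x - α) + k))) μ := i3'.add i4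
    have i2 : Integrable (fun x => c2 * (v x - α) ^ 2 +
        (c3 * ((w x - σ₁) * (v x - α)) + (c4 * (w x - σ₁) + (c5 * (v x - α) + k)))) μ :=
      i2'.add i3
    rw [integral_add i1 i2, integral_add i2' i3, integral_add i3' i4, integral_add i4' i5,
      integral_add i5' (integrable_const k), integral_const_mul, integral_const_mul,
      integral_const_mul, integral_const_mul, integral_const_mul, integral_const,
      A, B, Ia, Ib, ← hIdef]
    simp [smul_eq_mul, measureReal_def]
    ring
  -- square root facts
  set s : ℝ := Real.sqrt β with hsdef
  have hs : 0 < s := Real.sqrt_pos.mpr hβpos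
  have hs2 : s ^ 2 = β := Real.sq_sqrt hβpos.le
  set c : ℝ := σ₂ / s with hcdef
  have hc : 0 < c := div_pos hσ₂ hs
  have hcs : c * s = σ₂ := by rw [hcdef]; field_simp
  have hc2 : c ^ 2 * β = σ₂ ^ 2 := by rw [hcdef, ← hs2]; field_simp
  have hcβ : c * β = σ₂ * s := by rw [hcdef, ← hs2]; field_simp
  -- three expansions
  have E1 : ∫ x, (w x - v x) ^ 2 ∂μ
      = σ₂ ^ 2 * M + β * M - 2 * I + (σ₁ - α) ^ 2 * M := by
    have hpt : ∫ x, (w x - v x) ^ 2 ∂μ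
        = ∫ x, (1 * (w x - σ₁) ^ 2 + (1 * (v x - α) ^ 2 +
          ((-2) * ((w x - σ₁) * (v x - α)) + ((2 * (σ₁ - α)) * (w x - σ₁) +
          ((-2 * (σ₁ - α)) * (v x - α) + (σ₁ - α) ^ 2))))) ∂μ := by
      apply integral_congr_ae
      filter_upwards with x
      ring
    rw [hpt, key 1 1 (-2) (2 * (σ₁ - α)) (-2 * (σ₁ - α)) ((σ₁ - α) ^ 2)]
    ring
  have E2 : ∫ x, (u x - v x) ^ 2 ∂μ
      = (c - 1) ^ 2 * (β * M) + (σ₁ - α) ^ 2 * M := by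
    have hpt : ∫ x, (u x - v x) ^ 2 ∂μ
        = ∫ x, (0 * (w x - σ₁) ^ 2 + (((c - 1) ^ 2) * (v x - α) ^ 2 +
          (0 * ((w x - σ₁) * (v x - α)) + (0 * (w x - σ₁) +
          ((2 * (c - 1) * (σ₁ - α)) * (v x - α) + (σ₁ - α) ^ 2))))) ∂μ := by
      apply integral_congr_ae
      filter_upwards with x
      rw [hu x, hcdef]
      have : s ≠ 0 := hs.ne'
      field_simp
      ring
    rw [hpt, key 0 ((c - 1) ^ 2) 0 0 (2 * (c - 1) * (σ₁ - α)) ((σ₁ - α) ^ 2)]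
    ring
  have E3 : ∫ x, (w x - u x) ^ 2 ∂μ
      = σ₂ ^ 2 * M + c ^ 2 * (β * M) - 2 * c * I := by
    have hpt : ∫ x, (w x - u x) ^ 2 ∂μ
        = ∫ x, (1 * (w x - σ₁) ^ 2 + ((c ^ 2) * (v x - α) ^ 2 +
          ((-2 * c) * ((w x - σ₁) * (v x - α)) + (0 * (w x - σ₁) +
          (0 * (v x - α) + 0))))) ∂μ := by
      apply integral_congr_ae
      filter_upwards with x
      rw [hu x, hcdef]
      have : s ≠ 0 := hs.ne'
      field_simp
      ring
    rw [hpt, key 1 (c ^ 2) (-2 * c) 0 0 0]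
    ring
  -- derive I ≥ σ₂ * s * M
  have hImin : σ₂ * s * M ≤ I := by
    rw [E1, E2] at hwmin
    have hexp : (c - 1) ^ 2 * (β * M) = σ₂ ^ 2 * M - 2 * (σ₂ * s) * M + β * M := by
      have h' : (c - 1) ^ 2 * β = c ^ 2 * β - 2 * (c * β) + β := by ring
      calc (c - 1) ^ 2 * (β * M) = ((c - 1) ^ 2 * β) * M := by ring
        _ = (c ^ 2 * β - 2 * (c * β) + β) * M := by rw [h']
        _ = (σ₂ ^ 2 - 2 * (σ₂ * s) + β) * M := by rw [hc2, hcβ]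
        _ = σ₂ ^ 2 * M - 2 * (σ₂ * s) * M + β * M := by ring
    rw [hexp] at hwmin
    linarith
  -- conclude ∫ (w - u)² ≤ 0
  have hle : ∫ x, (w x - u x) ^ 2 ∂μ ≤ 0 := by
    rw [E3]
    have h1 : c ^ 2 * (β * M) = σ₂ ^ 2 * M := by rw [← mul_assoc, hc2]
    have h2 : 2 * c * (σ₂ * s * M) ≤ 2 * c * I :=
      mul_le_mul_of_nonneg_left hImin (by positivity)
    have h3 : 2 * c * (σ₂ * s * M) = 2 * (σ₂ ^ 2) * M := by
      calc 2 * c * (σ₂ * s * M) = 2 * ((c * s) * σ₂) * M := by ring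
        _ = 2 * (σ₂ * σ₂) * M := by rw [hcs]
        _ = 2 * (σ₂ ^ 2) * M := by ring
    nlinarith
  -- integrability of (w - u)²
  have hu2 : MemLp u 2 μ := by
    have h : MemLp (fun x => c * (v x - α) + σ₁) 2 μ :=
      (hb2.const_mul c).add (memLp_const σ₁)
    refine h.ae_eq (Filter.Eventually.of_forall fun x => ?_)
    rw [hu x, hcdef]
    ring
  have intwu : Integrable (fun x => (w x - u x) ^ 2) μ := (hwmem.sub hu2).integrable_sq
  have hzero : ∫ x, (w x - u x) ^ 2 ∂μ = 0 :=
    le_antisymm hle (integral_nonneg fun x => sq_nonneg _)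
  have hae : (fun x => (w x - u x) ^ 2) =ᵐ[μ] 0 :=
    (integral_eq_zero_iff_of_nonneg (fun x => sq_nonneg _) intwu).mp hzero
  filter_upwards [hae] with x hx
  have h1 : (w x - u x) ^ 2 = 0 := hx
  have h2 : w x - u x = 0 := by
    exact pow_eq_zero_iff (two_ne_zero) |>.mp h1
  linarith
end

section
/- Let N be a positive natural number and v ∈ ℝᴺ. Set α = (1/N) Σₗ vₗ and β = (1/N) Σₗ (vₗ − α)². Assume β > 0, σ₂ > 0, σ₁ ∈ ℝ, and define u ∈ ℝᴺ by uₗ = σ₂ · (vₗ − α)/√β + σ₁. Then (1/N) Σₗ uₗ = σ₁ and (1/N) Σₗ (uₗ − σ₁)² = σ₂², and for every w ∈ ℝᴺ with (1/N) Σₗ wₗ = σ₁ and (1/N) Σₗ (wₗ − σ₁)² = σ₂² one has Σₗ (uₗ − vₗ)² ≤ Σₗ (wₗ − vₗ)². That is, the discrete layer-normalization formula gives a minimizer of the squared Euclidean distance to v over all vectors with prescribed mean σ₁ and variance σ₂². -/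
/-- Discrete layer normalization (discrete version of Theorem 2.1): the vector
`uₗ = σ₂ (vₗ − α)/√β + σ₁` has mean `σ₁` and variance `σ₂²` and minimizes the squared
Euclidean distance to `v` over all vectors with mean `σ₁` and variance `σ₂²`. -/
theorem discrete_layer_norm_projection
    (N : ℕ) (hN : 0 < N) (v : Fin N → ℝ)
    (α β : ℝ)
    (hα : α = (N : ℝ)⁻¹ * ∑ l, v l)
    (hβ : β = (N : ℝ)⁻¹ * ∑ l, (v l - α) ^ 2)
    (hβpos : 0 < β)
    (σ₁ σ₂ : ℝ) (hσ₂ : 0 < σ₂)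
    (u : Fin N → ℝ)
    (hu : ∀ l, u l = σ₂ * (v l - α) / Real.sqrt β + σ₁) :
    ((N : ℝ)⁻¹ * ∑ l, u l = σ₁ ∧ (N : ℝ)⁻¹ * ∑ l, (u l - σ₁) ^ 2 = σ₂ ^ 2) ∧
    ∀ w : Fin N → ℝ,
      (N : ℝ)⁻¹ * ∑ l, w l = σ₁ →
      (N : ℝ)⁻¹ * ∑ l, (w l - σ₁) ^ 2 = σ₂ ^ 2 →
      ∑ l, (u l - v l) ^ 2 ≤ ∑ l, (w l - v l) ^ 2 := by
  have hNR : (0:ℝ) < (N:ℝ) := by exact_mod_cast hN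
  have hNne : (N:ℝ) ≠ 0 := ne_of_gt hNR
  have hs : (0:ℝ) < Real.sqrt β := Real.sqrt_pos.mpr hβpos
  have hsne : Real.sqrt β ≠ 0 := ne_of_gt hs
  have hsq : Real.sqrt β ^ 2 = β := Real.sq_sqrt hβpos.le
  have hv_sum : ∑ l, v l = (N:ℝ) * α := by rw [hα, ← mul_assoc, mul_inv_cancel₀ hNne, one_mul]
  have hcent : ∑ l, (v l - α) = 0 := by
    simp [Finset.sum_sub_distrib, hv_sum, mul_comm]
  have hvar : ∑ l, (v l - α) ^ 2 = (N:ℝ) * β := by rw [hβ, ← mul_assoc, mul_inv_cancel₀ hNne, one_mul]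
  have hu_sub : ∀ l, u l - σ₁ = (σ₂ / Real.sqrt β) * (v l - α) := by
    intro l; rw [hu l]; ring
  have hu_sum : ∑ l, u l = (N:ℝ) * σ₁ := by
    have h1 : ∑ l, (u l - σ₁) = (σ₂ / Real.sqrt β) * ∑ l, (v l - α) := by
      rw [Finset.mul_sum]; exact Finset.sum_congr rfl fun l _ => hu_sub l
    rw [hcent, mul_zero] at h1
    have := Finset.sum_sub_distrib (s := (Finset.univ : Finset (Fin N)))
      (f := u) (g := fun _ => σ₁)
    simp only [Finset.sum_const, Finset.card_univ, Fintype.card_fin, nsmul_eq_mul] at this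
    rw [this] at h1; linarith
  have hu_var : ∑ l, (u l - σ₁) ^ 2 = (N:ℝ) * σ₂ ^ 2 := by
    have h1 : ∑ l, (u l - σ₁) ^ 2 = (σ₂ / Real.sqrt β) ^ 2 * ∑ l, (v l - α) ^ 2 := by
      rw [Finset.mul_sum]; exact Finset.sum_congr rfl fun l _ => by rw [hu_sub l]; ring
    rw [h1, hvar, div_pow, hsq]; field_simp
  have humean : (N : ℝ)⁻¹ * ∑ l, u l = σ₁ := by rw [hu_sum]; field_simp
  have huvar : (N : ℝ)⁻¹ * ∑ l, (u l - σ₁) ^ 2 = σ₂ ^ 2 := by rw [hu_var]; field_simp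
  refine ⟨⟨humean, huvar⟩, ?_⟩
  intro w hwmean hwvar
  have hw_sum : ∑ l, w l = (N:ℝ) * σ₁ := by
    rw [← hwmean]; field_simp
  have hw_var : ∑ l, (w l - σ₁) ^ 2 = (N:ℝ) * σ₂ ^ 2 := by
    rw [← hwvar]; field_simp
  -- expansion identity
  have expand : ∀ f : Fin N → ℝ, ∑ l, f l = (N:ℝ) * σ₁ → ∑ l, (f l - σ₁) ^ 2 = (N:ℝ) * σ₂ ^ 2 →
      ∑ l, (f l - v l) ^ 2 =
        (N:ℝ) * σ₂ ^ 2 + (N:ℝ) * β + (N:ℝ) * (σ₁ - α) ^ 2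
          - 2 * ∑ l, (v l - α) * (f l - σ₁) := by
    intro f hf1 hf2
    have hfc : ∑ l, (f l - σ₁) = 0 := by
      have := Finset.sum_sub_distrib (s := (Finset.univ : Finset (Fin N)))
        (f := f) (g := fun _ => σ₁)
      simp only [Finset.sum_const, Finset.card_univ, Fintype.card_fin, nsmul_eq_mul] at this
      rw [this, hf1]; ring
    have key : ∀ l, (f l - v l) ^ 2 =
        (f l - σ₁) ^ 2 + (v l - α) ^ 2 - 2 * ((v l - α) * (f l - σ₁))
          + 2 * (σ₁ - α) * (f l - σ₁) - 2 * (σ₁ - α) * (v l - α) + (σ₁ - α) ^ 2 := by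
      intro l; ring
    rw [Finset.sum_congr rfl fun l _ => key l]
    rw [Finset.sum_add_distrib, Finset.sum_sub_distrib, Finset.sum_add_distrib,
      Finset.sum_sub_distrib, Finset.sum_add_distrib, ← Finset.mul_sum, ← Finset.mul_sum,
      ← Finset.mul_sum, hf2, hvar, hfc, hcent]
    simp [Finset.card_univ]
    ring
  have hP : ∑ l, (v l - α) * (u l - σ₁) = (N:ℝ) * σ₂ * Real.sqrt β := by
    have h1 : ∑ l, (v l - α) * (u l - σ₁) = (σ₂ / Real.sqrt β) * ∑ l, (v l - α) ^ 2 := by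
      rw [Finset.mul_sum]; exact Finset.sum_congr rfl fun l _ => by rw [hu_sub l]; ring
    rw [h1, hvar, div_mul_eq_mul_div, div_eq_iff hsne]
    linear_combination (-(N:ℝ) * σ₂) * hsq
  have hcs := Finset.sum_mul_sq_le_sq_mul_sq Finset.univ (fun l => v l - α) (fun l => w l - σ₁)
  simp only [hvar, hw_var] at hcs
  have hQ : ∑ l, (v l - α) * (w l - σ₁) ≤ (N:ℝ) * σ₂ * Real.sqrt β := by
    calc ∑ l, (v l - α) * (w l - σ₁) ≤ |∑ l, (v l - α) * (w l - σ₁)| := le_abs_self _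
      _ = Real.sqrt ((∑ l, (v l - α) * (w l - σ₁)) ^ 2) := (Real.sqrt_sq_eq_abs _).symm
      _ ≤ Real.sqrt ((N:ℝ) * β * ((N:ℝ) * σ₂ ^ 2)) := Real.sqrt_le_sqrt hcs
      _ = (N:ℝ) * σ₂ * Real.sqrt β := by
          rw [show (N:ℝ) * β * ((N:ℝ) * σ₂ ^ 2) = ((N:ℝ) * σ₂ * Real.sqrt β) ^ 2 by
            nlinarith [hsq], Real.sqrt_sq (by positivity)]
  rw [expand u hu_sum hu_var, expand w hw_sum hw_var, hP]
  linarith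
end

section
/- Let (Ω, μ) be a measure space with 0 < μ(Ω) < ∞, let u, v ∈ L²(μ) be real-valued, let λ₁, λ₂, σ₁ ∈ ℝ and σ₂ > 0. Suppose the stationarity equation (u − v) + λ₁/μ(Ω) + (2λ₂/μ(Ω))(u − σ₁) = 0 holds μ-almost everywhere, that (1/μ(Ω)) ∫ u dμ = σ₁, and that (1/μ(Ω)) ∫ (u − σ₁)² dμ = σ₂². Then λ₂ = −μ(Ω)/2 + (∫ v (u − σ₁) dμ) / (2σ₂²). -/
open MeasureTheory

/-- Equation (eq.ln.proof.lam2): multiplying the stationarity equation by `(u − σ₁)`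
and integrating over `Ω`, using the mean and variance constraints on `u`, yields
`λ₂ = −μ(Ω)/2 + (∫ v (u − σ₁) dμ)/(2σ₂²)`. -/
theorem lagrange_multiplier_lambda2
    {Ω : Type*} [MeasurableSpace Ω] (μ : Measure Ω)
    (h0 : 0 < μ Set.univ) (hfin : μ Set.univ < ⊤)
    (u v : Ω → ℝ) (hu : MemLp u 2 μ) (hv : MemLp v 2 μ)
    (lam₁ lam₂ σ₁ σ₂ : ℝ) (hσ₂ : 0 < σ₂)
    (hstat : ∀ᵐ x ∂μ,
      (u x - v x) + lam₁ / (μ Set.univ).toReal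
        + (2 * lam₂ / (μ Set.univ).toReal) * (u x - σ₁) = 0)
    (hmean : ((μ Set.univ).toReal)⁻¹ * ∫ x, u x ∂μ = σ₁)
    (hvar : ((μ Set.univ).toReal)⁻¹ * ∫ x, (u x - σ₁) ^ 2 ∂μ = σ₂ ^ 2) :
    lam₂ = -(μ Set.univ).toReal / 2
      + (∫ x, v x * (u x - σ₁) ∂μ) / (2 * σ₂ ^ 2) := by
  have hFin : IsFiniteMeasure μ := ⟨lt_of_le_of_lt (measure_mono (Set.subset_univ _)) hfin⟩
  set M : ℝ := (μ Set.univ).toReal with hM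
  have hMpos : 0 < M := ENNReal.toReal_pos h0.ne' hfin.ne
  have huσ : MemLp (fun x => u x - σ₁) 2 μ := hu.sub (memLp_const σ₁)
  have i1 : Integrable (fun x => u x - σ₁) μ := huσ.integrable one_le_two
  have iu : Integrable u μ := hu.integrable one_le_two
  have hmul : ∀ {f g : Ω → ℝ}, MemLp f 2 μ → MemLp g 2 μ →
      Integrable (fun x => f x * g x) μ := by
    intro f g hf hg
    have : MemLp (f • g) 1 μ := hg.smul hf (hpqr := ⟨by simp [ENNReal.inv_two_add_inv_two]⟩)
    exact (memLp_one_iff_integrable.mp this)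
  have iuσ : Integrable (fun x => u x * (u x - σ₁)) μ := hmul hu huσ
  have ivσ : Integrable (fun x => v x * (u x - σ₁)) μ := hmul hv huσ
  have iσσ : Integrable (fun x => (u x - σ₁) * (u x - σ₁)) μ := hmul huσ huσ
  have iσ2 : Integrable (fun x => (u x - σ₁) ^ 2) μ := by
    simpa [pow_two] using iσσ
  -- ∫ (u - σ₁) = 0
  have hIu : ∫ x, u x ∂μ = σ₁ * M := by
    field_simp at hmean
    linarith [hmean]
  have hint1 : ∫ x, (u x - σ₁) ∂μ = 0 := by
    rw [integral_sub iu (integrable_const σ₁), integral_const, hIu]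
    simp [smul_eq_mul, mul_comm, hM, measureReal_def]
  -- ∫ (u - σ₁)^2 = σ₂^2 * M
  have hint2 : ∫ x, (u x - σ₁) ^ 2 ∂μ = σ₂ ^ 2 * M := by
    field_simp at hvar
    linarith [hvar]
  -- ∫ u (u - σ₁) = σ₂^2 * M
  have hintu : ∫ x, u x * (u x - σ₁) ∂μ = σ₂ ^ 2 * M := by
    have : ∀ x, u x * (u x - σ₁) = (u x - σ₁) ^ 2 + σ₁ * (u x - σ₁) := by
      intro x; ring
    rw [show (fun x => u x * (u x - σ₁)) = fun x => (u x - σ₁) ^ 2 + σ₁ * (u x - σ₁) from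
      funext this]
    rw [integral_add iσ2 (i1.const_mul σ₁), integral_const_mul, hint1, hint2]
    ring
  -- a.e. identity after multiplying stationarity by (u - σ₁)
  have hae : (fun x => v x * (u x - σ₁)) =ᵐ[μ]
      (fun x => u x * (u x - σ₁) + (lam₁ / M) * (u x - σ₁)
        + (2 * lam₂ / M) * ((u x - σ₁) ^ 2)) := by
    filter_upwards [hstat] with x hx
    have hvx : v x = u x + lam₁ / M + (2 * lam₂ / M) * (u x - σ₁) := by linarith
    rw [hvx]; ring
  have hIv : ∫ x, v x * (u x - σ₁) ∂μ
      = σ₂ ^ 2 * M + 2 * lam₂ * σ₂ ^ 2 := by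
    rw [integral_congr_ae hae,
      integral_add (f := fun x => u x * (u x - σ₁) + lam₁ / M * (u x - σ₁))
        (g := fun x => 2 * lam₂ / M * (u x - σ₁) ^ 2)
        (iuσ.add (i1.const_mul _)) (iσ2.const_mul _),
      integral_add (f := fun x => u x * (u x - σ₁)) (g := fun x => lam₁ / M * (u x - σ₁))
        iuσ (i1.const_mul _),
      integral_const_mul, integral_const_mul, hint1, hint2, hintu]
    field_simp
    ring
  rw [hIv]
  have hσ2 : σ₂ ^ 2 ≠ 0 := by positivity
  field_simp
  ring
end
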